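/- Let D be a digraph on n vertices of vertex connectivity κ. If every atom A of D satisfies 2|A| ≤ n − κ, then any two distinct atoms of D are disjoint. -/

import Mathlib

open Classical

/-- A digraph (given by its edge relation `E`) is strongly connected iff for every
ordered pair of vertices there is a directed path from the first to the second. -/
def SC {V : Type*} (E : V → V → Prop) : Prop :=
  ∀ a b : V, Relation.ReflTransGen E a b

/-- The subdigraph induced on `A` is strongly connected. -/
def SCOn {V : Type*} (E : V → V → Prop) (A : Set V) : Prop :=
  ∀ a ∈ A, ∀ b ∈ A, Relation.ReflTransGen (fun x y => x ∈ A ∧ y ∈ A ∧ E x y) a b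

/-- Out-neighborhood of a set of vertices. -/
def Nout {V : Type*} (E : V → V → Prop) (A : Set V) : Set V :=
  {x | x ∉ A ∧ ∃ y ∈ A, E y x}

/-- Vertex connectivity: the least cardinality of a set `T` of vertices whose removal
leaves a non-strongly-connected digraph; `Nat.card V - 1` if no such `T` exists. -/
noncomputable def kappa {V : Type*} [Finite V] (E : V → V → Prop) : ℕ :=
  if ∃ T : Set V, ¬ SCOn E Tᶜ then
    sInf {m | ∃ T : Set V, T.ncard = m ∧ ¬ SCOn E Tᶜ}
  else Nat.card V - 1

/-- A part of a digraph. -/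
def IsPart {V : Type*} (E : V → V → Prop) (A : Set V) : Prop :=
  A.Nonempty ∧ ((A ∪ Nout E A)ᶜ : Set V).Nonempty

/-- An atom: a part with `|N(A)| = κ` of minimum cardinality among such parts. -/
def IsAtomD {V : Type*} [Finite V] (E : V → V → Prop) (A : Set V) : Prop :=
  IsPart E A ∧ (Nout E A).ncard = kappa E ∧
    ∀ B : Set V, IsPart E B → (Nout E B).ncard = kappa E → A.ncard ≤ B.ncard

/-- If every atom `A` of a digraph on `n` vertices of vertex connectivity `κ`
satisfies `2|A| ≤ n − κ`, then any two distinct atoms are disjoint. -/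
-- removing N(P) disconnects
lemma not_scon_of_part {V : Type*} (E : V → V → Prop) (P : Set V) (hP : IsPart E P) :
    ¬ SCOn E (Nout E P)ᶜ := by
  obtain ⟨⟨p, hp⟩, ⟨c, hc⟩⟩ := hP
  intro h
  have hpT : p ∈ (Nout E P)ᶜ := fun hmem => hmem.1 hp
  have hcT : c ∈ (Nout E P)ᶜ := fun hmem => hc (Or.inr hmem)
  have hpath := h p hpT c hcT
  have key : ∀ z, Relation.ReflTransGen
      (fun x y => x ∈ (Nout E P)ᶜ ∧ y ∈ (Nout E P)ᶜ ∧ E x y) p z → z ∈ P := by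
    intro z hz
    induction hz with
    | refl => exact hp
    | tail _ hstep ih =>
      rcases hstep with ⟨_, hyT, hE⟩
      by_contra hyP
      exact hyT ⟨hyP, _, ih, hE⟩
  exact hc (Or.inl (key c hpath))

lemma kappa_le_part {V : Type*} [Finite V] (E : V → V → Prop) (P : Set V)
    (hP : IsPart E P) : kappa E ≤ (Nout E P).ncard := by
  have h := not_scon_of_part E P hP
  rw [kappa, if_pos ⟨_, h⟩]
  exact Nat.sInf_le ⟨Nout E P, rfl, h⟩

lemma nout_disj {V : Type*} (E : V → V → Prop) (A : Set V) : Disjoint A (Nout E A) :=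
  Set.disjoint_left.mpr fun _ hx hnx => hnx.1 hx

lemma closure_inter_subset' {V : Type*} (E : V → V → Prop) (A B : Set V) :
    (A ∩ B) ∪ Nout E (A ∩ B) ⊆ (A ∪ Nout E A) ∩ (B ∪ Nout E B) := by
  rintro x (⟨hA, hB⟩ | ⟨hx, y, ⟨hyA, hyB⟩, hE⟩)
  · exact ⟨Or.inl hA, Or.inl hB⟩
  · constructor
    · by_cases hxA : x ∈ A
      · exact Or.inl hxA
      · exact Or.inr ⟨hxA, y, hyA, hE⟩
    · by_cases hxB : x ∈ B
      · exact Or.inl hxB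
      · exact Or.inr ⟨hxB, y, hyB, hE⟩

lemma closure_union_subset {V : Type*} (E : V → V → Prop) (A B : Set V) :
    (A ∪ B) ∪ Nout E (A ∪ B) ⊆ (A ∪ Nout E A) ∪ (B ∪ Nout E B) := by
  rintro x ((hA | hB) | ⟨hx, y, (hyA | hyB), hE⟩)
  · exact Or.inl (Or.inl hA)
  · exact Or.inr (Or.inl hB)
  · by_cases hxA : x ∈ A
    · exact Or.inl (Or.inl hxA)
    · exact Or.inl (Or.inr ⟨hxA, y, hyA, hE⟩)
  · by_cases hxB : x ∈ B
    · exact Or.inr (Or.inl hxB)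
    · exact Or.inr (Or.inr ⟨hxB, y, hyB, hE⟩)

lemma beta_eq {V : Type*} [Finite V] (E : V → V → Prop) (A : Set V) :
    (A ∪ Nout E A).ncard = A.ncard + (Nout E A).ncard :=
  Set.ncard_union_eq (nout_disj E A) (Set.toFinite _) (Set.toFinite _)

lemma submod {V : Type*} [Finite V] (E : V → V → Prop) (A B : Set V) :
    (Nout E (A ∩ B)).ncard + (Nout E (A ∪ B)).ncard
      ≤ (Nout E A).ncard + (Nout E B).ncard := by
  have h1 : ((A ∩ B) ∪ Nout E (A ∩ B)).ncard
      ≤ ((A ∪ Nout E A) ∩ (B ∪ Nout E B)).ncard :=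
    Set.ncard_le_ncard (closure_inter_subset' E A B) (Set.toFinite _)
  have h2 : ((A ∪ B) ∪ Nout E (A ∪ B)).ncard
      ≤ ((A ∪ Nout E A) ∪ (B ∪ Nout E B)).ncard :=
    Set.ncard_le_ncard (closure_union_subset E A B) (Set.toFinite _)
  have h3 := Set.ncard_union_add_ncard_inter (A ∪ Nout E A) (B ∪ Nout E B)
    (Set.toFinite _) (Set.toFinite _)
  have h4 := Set.ncard_union_add_ncard_inter A B (Set.toFinite _) (Set.toFinite _)
  have b1 := beta_eq E (A ∩ B)
  have b2 := beta_eq E (A ∪ B)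
  have b3 := beta_eq E A
  have b4 := beta_eq E B
  omega

theorem stmt_4 {V : Type*} [Finite V] (E : V → V → Prop)
    (hsmall : ∀ A : Set V, IsAtomD E A → 2 * A.ncard ≤ Nat.card V - kappa E) :
    ∀ A B : Set V, IsAtomD E A → IsAtomD E B → A ≠ B → A ∩ B = ∅ := by
  intro A B hA hB hne
  by_contra hcon
  have hI : (A ∩ B).Nonempty := Set.nonempty_iff_ne_empty.mpr hcon
  obtain ⟨hApart, hAn, hAmin⟩ := hA
  obtain ⟨hBpart, hBn, hBmin⟩ := hB
  set κ := kappa E with hκ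
  -- A ∩ B is a part
  have hIpart : IsPart E (A ∩ B) := by
    refine ⟨hI, ?_⟩
    obtain ⟨c, hc⟩ := hApart.2
    exact ⟨c, fun h => hc ((closure_inter_subset' E A B h).1)⟩
  have hIge : κ ≤ (Nout E (A ∩ B)).ncard := kappa_le_part E _ hIpart
  -- submodularity
  have hsub := submod E A B
  rw [hAn, hBn] at hsub
  have hUle : (Nout E (A ∪ B)).ncard ≤ κ := by omega
  -- cardinality facts
  have hiu := Set.ncard_union_add_ncard_inter A B (Set.toFinite _) (Set.toFinite _)
  have hI1 : 1 ≤ (A ∩ B).ncard := (Set.ncard_pos (Set.toFinite _)).mpr hI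
  have hAsm := hsmall A ⟨hApart, hAn, hAmin⟩
  have hBsm := hsmall B ⟨hBpart, hBn, hBmin⟩
  have hκn : κ ≤ Nat.card V := by
    rw [← hAn, ← Set.ncard_univ]
    exact Set.ncard_le_ncard (Set.subset_univ _) (Set.toFinite _)
  -- A ∪ B is a part
  have hUpart : IsPart E (A ∪ B) := by
    refine ⟨hApart.1.mono Set.subset_union_left, ?_⟩
    rw [Set.nonempty_compl]
    intro heq
    have h1 : ((A ∪ B) ∪ Nout E (A ∪ B)).ncard = Nat.card V := by
      rw [heq, Set.ncard_univ]
    have h2 := beta_eq E (A ∪ B)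
    omega
  have hUge : κ ≤ (Nout E (A ∪ B)).ncard := kappa_le_part E _ hUpart
  have hIn : (Nout E (A ∩ B)).ncard = κ := by omega
  -- atom minimality
  have h1 : A.ncard ≤ (A ∩ B).ncard := hAmin _ hIpart hIn
  have h2 : B.ncard ≤ (A ∩ B).ncard := hBmin _ hIpart hIn
  have hAeq : A ∩ B = A :=
    Set.eq_of_subset_of_ncard_le Set.inter_subset_left h1 (Set.toFinite _)
  have hBeq : A ∩ B = B :=
    Set.eq_of_subset_of_ncard_le Set.inter_subset_right h2 (Set.toFinite _)
  exact hne (hAeq ▸ hBeq)
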